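/- Let R₁ and R₂ be real closed fields (linearly ordered fields in which every nonnegative element has a square root and every polynomial of odd degree has a root) with the same uncountable cardinality. Then the fields R₁(i) and R₂(i), obtained by adjoining to R₁ and R₂ a root of the polynomial X² + 1, are isomorphic as fields. -/

import Mathlib

open Polynomial Module Cardinal
open scoped IntermediateField

section helpers

variable {R : Type*} [Field R] [LinearOrder R] [IsStrictOrderedRing R]

lemma RCF.natDegree_eq_one_of_odd (hodd : ∀ p : R[X], Odd p.natDegree → ∃ x : R, p.IsRoot x)
    {p : R[X]} (hp : Irreducible p) (hoddp : Odd p.natDegree) : p.natDegree = 1 := by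
  obtain ⟨x, hx⟩ := hodd p hoddp
  obtain ⟨q, hq⟩ := dvd_iff_isRoot.2 hx
  have hqu : IsUnit q := by
    rcases hp.isUnit_or_isUnit hq with h | h
    · exact absurd h (not_isUnit_X_sub_C x)
    · exact h
  have hq0 : q ≠ 0 := fun h => by simp [h] at hq; exact hp.ne_zero hq
  rw [hq, natDegree_mul (X_sub_C_ne_zero x) hq0, natDegree_X_sub_C,
    natDegree_eq_zero_of_isUnit hqu]

lemma RCF.finrank_eq_one_of_odd (hodd : ∀ p : R[X], Odd p.natDegree → ∃ x : R, p.IsRoot x)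
    (F : Type*) [Field F] [Algebra R F] [FiniteDimensional R F]
    (h : Odd (finrank R F)) : finrank R F = 1 := by
  by_contra hne
  -- find an element not in the image of R
  have : ∃ α : F, α ∉ Set.range (algebraMap R F) := by
    by_contra h'
    push_neg at h'
    have hsurj : Function.Surjective (Algebra.linearMap R F) := fun x => h' x
    have := LinearEquiv.finrank_eq
      (LinearEquiv.ofBijective (Algebra.linearMap R F)
        ⟨fun a b hab => (algebraMap R F).injective hab, hsurj⟩)
    simp [Module.finrank_self] at this
    exact hne this.symm
  obtain ⟨α, hα⟩ := this
  have hint : IsIntegral R α := IsIntegral.of_finite R α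
  have hd : (minpoly R α).natDegree = finrank R R⟮α⟯ :=
    (IntermediateField.adjoin.finrank hint).symm
  have hdvd : finrank R R⟮α⟯ ∣ finrank R F :=
    ⟨finrank R⟮α⟯ F, (Module.finrank_mul_finrank R R⟮α⟯ F).symm⟩
  have hoddd : Odd (minpoly R α).natDegree := by
    rw [hd]; exact h.of_dvd_nat hdvd  -- maybe wrong name
  have h1 : (minpoly R α).natDegree = 1 :=
    RCF.natDegree_eq_one_of_odd hodd (minpoly.irreducible hint) hoddd
  have : α ∈ (algebraMap R F).range := by
    rw [← minpoly.degree_eq_one_iff]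
    rw [degree_eq_natDegree (minpoly.ne_zero hint), h1]; rfl
  exact hα this

end helpers

section quad

variable {F E : Type*} [Field F] [CharZero F] [Field E] [Algebra F E]

lemma RCF.quad_aux [FiniteDimensional F E] (h2 : finrank F E = 2) :
    ∃ (β : E) (c : F), β ∉ Set.range (algebraMap F E) ∧ β ^ 2 = algebraMap F E c := by
  have : ∃ α : E, α ∉ Set.range (algebraMap F E) := by
    by_contra h'
    push_neg at h'
    have hsurj : Function.Surjective (Algebra.linearMap F E) := fun x => h' x
    have := LinearEquiv.finrank_eq
      (LinearEquiv.ofBijective (Algebra.linearMap F E)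
        ⟨fun a b hab => (algebraMap F E).injective hab, hsurj⟩)
    simp [Module.finrank_self] at this
    omega
  obtain ⟨α, hα⟩ := this
  have hint : IsIntegral F α := IsIntegral.of_finite F α
  have hd : (minpoly F α).natDegree = finrank F F⟮α⟯ :=
    (IntermediateField.adjoin.finrank hint).symm
  have hdvd : finrank F F⟮α⟯ ∣ finrank F E :=
    ⟨finrank F⟮α⟯ E, (Module.finrank_mul_finrank F F⟮α⟯ E).symm⟩
  have hne1 : (minpoly F α).natDegree ≠ 1 := by
    intro h1
    have : α ∈ (algebraMap F E).range := by
      rw [← minpoly.degree_eq_one_iff, degree_eq_natDegree (minpoly.ne_zero hint), h1]; rfl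
    exact hα this
  have hpos : 0 < (minpoly F α).natDegree := minpoly.natDegree_pos hint
  have hdeg2 : (minpoly F α).natDegree = 2 := by
    rw [h2] at hdvd
    rw [← hd] at *
    rcases (Nat.dvd_prime Nat.prime_two).1 hdvd with h | h <;> omega
  -- the quadratic relation
  have haev := minpoly.aeval F α
  rw [Polynomial.aeval_eq_sum_range, hdeg2] at haev
  have hmon : (minpoly F α).coeff 2 = 1 := by
    have := (minpoly.monic hint).coeff_natDegree
    rwa [hdeg2] at this
  rw [Finset.sum_range_succ, Finset.sum_range_succ, Finset.sum_range_succ, hmon] at haev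
  simp only [Finset.sum_range_zero, zero_add, pow_zero, pow_one, one_smul] at haev
  set c1 := (minpoly F α).coeff 1 with hc1
  set c0 := (minpoly F α).coeff 0 with hc0
  refine ⟨α + algebraMap F E (c1 / 2), (c1 / 2) ^ 2 - c0, ?_, ?_⟩
  · intro ⟨t, ht⟩
    exact hα ⟨t - c1 / 2, by rw [map_sub, ht]; ring⟩
  · have hsm0 : c0 • (1 : E) = algebraMap F E c0 := by
      rw [Algebra.smul_def, mul_one]
    have hsm1 : c1 • α = algebraMap F E c1 * α := Algebra.smul_def c1 α
    rw [hsm0, hsm1] at haev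
    rw [map_sub, map_pow, map_div₀, map_ofNat]
    have h2F : (2 : F) ≠ 0 := by norm_num
    have h2ne : (2 : E) ≠ 0 := fun h => h2F ((algebraMap F E).injective
      (by rw [map_ofNat, h, map_zero]))
    field_simp
    linear_combination (4 : E) * haev

lemma RCF.no_quad [FiniteDimensional F E] (hsqF : ∀ z : F, ∃ w : F, w ^ 2 = z)
    (h2 : finrank F E = 2) : False := by
  obtain ⟨β, c, hβ, hc⟩ := RCF.quad_aux h2
  obtain ⟨w, hw⟩ := hsqF c
  have : (β - algebraMap F E w) * (β + algebraMap F E w) = 0 := by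
    have : (algebraMap F E w) ^ 2 = algebraMap F E c := by rw [← map_pow, hw]
    linear_combination hc - this
  rcases mul_eq_zero.1 this with h | h
  · exact hβ ⟨w, by linear_combination -h⟩
  · exact hβ ⟨-w, by rw [map_neg]; linear_combination -h⟩

end quad

section squares

variable {R : Type*} [Field R] [LinearOrder R] [IsStrictOrderedRing R]

lemma RCF.sq_exists (hsq : ∀ x : R, 0 ≤ x → ∃ y : R, y ^ 2 = x)
    (F : Type*) [Field F] [Algebra R F] [FiniteDimensional R F]
    (h2 : finrank R F = 2) : ∀ z : F, ∃ w : F, w ^ 2 = z := by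
  obtain ⟨β, c, hβ, hc⟩ := RCF.quad_aux (F := R) (E := F) h2
  -- c is negative
  have hcneg : c < 0 := by
    by_contra h
    push_neg at h
    obtain ⟨w, hw⟩ := hsq c h
    have : (β - algebraMap R F w) * (β + algebraMap R F w) = 0 := by
      have hw' : (algebraMap R F w) ^ 2 = algebraMap R F c := by rw [← map_pow, hw]
      linear_combination hc - hw'
    rcases mul_eq_zero.1 this with h' | h'
    · exact hβ ⟨w, by linear_combination -h'⟩
    · exact hβ ⟨-w, by rw [map_neg]; linear_combination -h'⟩
  obtain ⟨b0, hb0⟩ := hsq (-c) (by linarith)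
  have hb0ne : b0 ≠ 0 := by
    intro h; rw [h] at hb0; simp at hb0; linarith
  set j : F := β / algebraMap R F b0 with hjdef
  have hbne' : algebraMap R F b0 ≠ 0 := fun h => hb0ne ((algebraMap R F).injective (by rw [h, map_zero]))
  have hcne : c ≠ 0 := ne_of_lt hcneg
  have hj2 : j ^ 2 = -1 := by
    rw [hjdef, div_pow, hc, ← map_pow, hb0, ← map_div₀, div_neg, div_self hcne, map_neg, map_one]
  have hjnr : j ∉ Set.range (algebraMap R F) := by
    intro ⟨t, ht⟩
    exact hβ ⟨t * b0, by rw [map_mul, ht, hjdef, div_mul_cancel₀ _ hbne']⟩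
  -- {1, j} is a basis
  have hli : LinearIndependent R ![(1 : F), j] := by
    rw [LinearIndependent.pair_iff]
    intro s t hst
    by_cases ht : t = 0
    · subst ht
      simp only [zero_smul, add_zero, smul_eq_mul, mul_one] at hst
      have : algebraMap R F s = 0 := by rwa [Algebra.smul_def, mul_one] at hst
      exact ⟨(algebraMap R F).injective (by rw [this, map_zero]), rfl⟩
    · exfalso
      apply hjnr
      refine ⟨-s / t, ?_⟩
      rw [map_div₀, map_neg]
      have hs : algebraMap R F s + algebraMap R F t * j = 0 := by
        rw [Algebra.smul_def, mul_one, Algebra.smul_def] at hst; exact hst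
      have htne : algebraMap R F t ≠ 0 := fun h => ht ((algebraMap R F).injective (by rw [h, map_zero]))
      field_simp
      linear_combination -hs
  have hcard : Fintype.card (Fin 2) = finrank R F := by simp [h2]
  set B := basisOfLinearIndependentOfCardEqFinrank hli hcard with hB
  have hBcoe : ⇑B = ![(1 : F), j] := coe_basisOfLinearIndependentOfCardEqFinrank hli hcard
  intro z
  have hz : z = algebraMap R F (B.repr z 0) + algebraMap R F (B.repr z 1) * j := by
    conv_lhs => rw [← B.sum_repr z]
    rw [Fin.sum_univ_two, hBcoe]
    simp [Algebra.smul_def]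
  set a := B.repr z 0
  set b := B.repr z 1
  -- find square root of a + b * j
  obtain ⟨r0, hr0⟩ := hsq (a ^ 2 + b ^ 2) (by positivity)
  set r := |r0| with hr
  have hr2 : r ^ 2 = a ^ 2 + b ^ 2 := by rw [hr, sq_abs, hr0]
  have hrpos : 0 ≤ r := abs_nonneg r0
  have hra : 0 ≤ (r + a) / 2 := by nlinarith [sq_nonneg (r + a), sq_nonneg (r - a), sq_nonneg b]
  have hra' : 0 ≤ (r - a) / 2 := by nlinarith [sq_nonneg (r + a), sq_nonneg (r - a), sq_nonneg b]
  obtain ⟨cc, hcc⟩ := hsq _ hra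
  obtain ⟨dd, hdd⟩ := hsq _ hra'
  have hcd : (2 * cc * dd) ^ 2 = b ^ 2 := by
    have h4 : (2 * cc * dd) ^ 2 = 4 * cc ^ 2 * dd ^ 2 := by ring
    rw [h4, hcc, hdd]
    linear_combination hr2
  have hcd2 : 2 * cc * dd = b ∨ 2 * cc * dd = -b := by
    have : (2 * cc * dd - b) * (2 * cc * dd + b) = 0 := by linear_combination hcd
    rcases mul_eq_zero.1 this with h | h
    · left; linarith
    · right; linarith
  have hc2d2 : cc ^ 2 - dd ^ 2 = a := by rw [hcc, hdd]; ring
  have key : ∀ s : R, 2 * cc * dd = s →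
      (algebraMap R F cc + algebraMap R F dd * j) ^ 2 = algebraMap R F a + algebraMap R F s * j := by
    intro s hs
    have HC : (algebraMap R F cc) ^ 2 - (algebraMap R F dd) ^ 2 = algebraMap R F a := by
      rw [← map_pow, ← map_pow, ← map_sub, hc2d2]
    have H2 : 2 * algebraMap R F cc * algebraMap R F dd = algebraMap R F s := by
      rw [← hs, map_mul, map_mul, map_ofNat]
    linear_combination (algebraMap R F dd) ^ 2 * hj2 + HC + H2 * j
  rcases hcd2 with h | h
  · exact ⟨algebraMap R F cc + algebraMap R F dd * j, by rw [key b h, ← hz]⟩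
  · refine ⟨algebraMap R F cc - algebraMap R F dd * j, ?_⟩
    have := key (-b) h
    rw [hz]
    rw [map_neg] at this
    have Hmap : 2 * algebraMap R F cc * algebraMap R F dd = -(algebraMap R F b) := by
      rw [← map_neg, ← h, map_mul, map_mul, map_ofNat]
    linear_combination this - 2 * j * Hmap
  
end squares

section main

variable {R : Type*} [Field R] [LinearOrder R] [IsStrictOrderedRing R]

lemma RCF.finrank_le_two_of_galois (hsq : ∀ x : R, 0 ≤ x → ∃ y : R, y ^ 2 = x)
    (hodd : ∀ p : R[X], Odd p.natDegree → ∃ x : R, p.IsRoot x)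
    (M : Type*) [Field M] [Algebra R M] [FiniteDimensional R M] [IsGalois R M] :
    finrank R M ≤ 2 := by
  haveI : Fact (Nat.Prime 2) := ⟨Nat.prime_two⟩
  set G := M ≃ₐ[R] M with hG
  have hcardG : Fintype.card G = finrank R M := Nat.card_eq_fintype_card.symm.trans (IsGalois.card_aut_eq_finrank R M)
  obtain ⟨P⟩ : Nonempty (Sylow 2 G) := inferInstance
  classical
  have hfix : finrank (IntermediateField.fixedField (P : Subgroup G)) M
      = Fintype.card (P : Subgroup G) :=
    (IntermediateField.finrank_fixedField_eq_card (P : Subgroup G)).trans Nat.card_eq_fintype_card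
  set F := IntermediateField.fixedField (P : Subgroup G)
  have htower : finrank R F * finrank F M = finrank R M :=
    Module.finrank_mul_finrank R F M
  have hindex : Fintype.card (P : Subgroup G) * (P : Subgroup G).index = Fintype.card G := by
    rw [← Nat.card_eq_fintype_card, ← Nat.card_eq_fintype_card]
    exact Subgroup.card_mul_index _
  have hPpos : 0 < Fintype.card (P : Subgroup G) := Fintype.card_pos
  have hfr : finrank R F = (P : Subgroup G).index := by
    have := htower
    rw [hfix, ← hcardG, ← hindex] at this
    exact Nat.eq_of_mul_eq_mul_left hPpos (by linarith [this])
  have hoddF : Odd (finrank R F) := by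
    rw [hfr, Nat.odd_iff]
    have hnd : ¬ 2 ∣ (P : Subgroup G).index := P.not_dvd_index
    omega
  have hF1 : finrank R F = 1 := RCF.finrank_eq_one_of_odd hodd F hoddF
  have hGP : Fintype.card G = Fintype.card (P : Subgroup G) := by
    rw [← hcardG] at htower
    rw [hF1, one_mul, hfix] at htower
    omega
  obtain ⟨n, hn⟩ : ∃ n : ℕ, Fintype.card G = 2 ^ n := by
    obtain ⟨n, hn⟩ := (IsPGroup.iff_card (p := 2)).1 P.isPGroup'
    exact ⟨n, by rw [hGP, ← Nat.card_eq_fintype_card, hn]⟩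
  rcases Nat.lt_or_ge n 2 with hn2 | hn2
  · rw [← hcardG, hn]
    interval_cases n <;> norm_num
  -- now n ≥ 2 : derive a contradiction
  exfalso
  obtain ⟨m, rfl⟩ : ∃ m, n = m + 2 := ⟨n - 2, by omega⟩
  have hdvd1 : 2 ^ (m + 1) ∣ Nat.card G := by
    rw [Nat.card_eq_fintype_card, hn]
    exact pow_dvd_pow 2 (by omega)
  obtain ⟨H₁, hH₁⟩ := Sylow.exists_subgroup_card_pow_prime 2 hdvd1
  set F₁ := IntermediateField.fixedField H₁ with hF₁
  have hfix1 : finrank F₁ M = 2 ^ (m + 1) := by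
    rw [IntermediateField.finrank_fixedField_eq_card H₁, hH₁]
  have hfr1 : finrank R F₁ = 2 := by
    have ht1 : finrank R F₁ * finrank F₁ M = finrank R M := Module.finrank_mul_finrank R F₁ M
    rw [hfix1, ← hcardG, hn] at ht1
    have : (2:ℕ) ^ (m + 2) = 2 * 2 ^ (m + 1) := by ring
    rw [this] at ht1
    exact Nat.eq_of_mul_eq_mul_right (by positivity) ht1
  -- F₁ has all square roots
  have hsqF₁ : ∀ z : F₁, ∃ w : F₁, w ^ 2 = z := RCF.sq_exists hsq F₁ hfr1
  haveI : CharZero F₁ := charZero_of_injective_algebraMap (algebraMap R F₁).injective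
  -- now find a quadratic extension of F₁ inside M
  haveI : IsGalois F₁ M := inferInstance
  have hcard1 : Fintype.card (M ≃ₐ[F₁] M) = 2 ^ (m + 1) := by
    rw [← Nat.card_eq_fintype_card, IsGalois.card_aut_eq_finrank F₁ M, hfix1]
  have hdvd2 : 2 ^ m ∣ Nat.card (M ≃ₐ[F₁] M) := by
    rw [Nat.card_eq_fintype_card, hcard1]
    exact pow_dvd_pow 2 (by omega)
  obtain ⟨H₂, hH₂⟩ := Sylow.exists_subgroup_card_pow_prime 2 hdvd2
  set F₂ := IntermediateField.fixedField H₂ with hF₂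
  have hfix2 : finrank F₂ M = 2 ^ m := by
    rw [IntermediateField.finrank_fixedField_eq_card H₂, hH₂]
  have hfr2 : finrank F₁ F₂ = 2 := by
    have ht2 : finrank F₁ F₂ * finrank F₂ M = finrank F₁ M := Module.finrank_mul_finrank F₁ F₂ M
    rw [hfix2, hfix1] at ht2
    have : (2:ℕ) ^ (m + 1) = 2 * 2 ^ m := by ring
    rw [this] at ht2
    exact Nat.eq_of_mul_eq_mul_right (by positivity) ht2
  exact RCF.no_quad hsqF₁ hfr2

lemma RCF.finrank_le_two (hsq : ∀ x : R, 0 ≤ x → ∃ y : R, y ^ 2 = x)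
    (hodd : ∀ p : R[X], Odd p.natDegree → ∃ x : R, p.IsRoot x)
    (L : Type*) [Field L] [Algebra R L] [FiniteDimensional R L] :
    finrank R L ≤ 2 := by
  set A := AlgebraicClosure L
  haveI : Algebra.IsAlgebraic R L := Algebra.IsAlgebraic.of_finite R L
  haveI : Algebra.IsAlgebraic R A := Algebra.IsAlgebraic.trans R L A
  haveI : IsAlgClosure R A := ⟨inferInstance, inferInstance⟩
  haveI : Normal R A := IsAlgClosure.normal R A
  set M := IntermediateField.normalClosure R L A with hM
  haveI : IsGalois R M := ⟨⟩
  haveI : FiniteDimensional L M := FiniteDimensional.right R L M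
  have hle : finrank R L ≤ finrank R M := by
    rw [← Module.finrank_mul_finrank R L M]
    exact Nat.le_mul_of_pos_right _ finrank_pos
  have h := RCF.finrank_le_two_of_galois hsq hodd M
  omega

end main

section adjoin

variable (R : Type*) [Field R] [LinearOrder R] [IsStrictOrderedRing R]

lemma RCF.irreducible_X_sq_add_one : Irreducible (X ^ 2 + 1 : R[X]) := by
  have hdeg : (X ^ 2 + 1 : R[X]).natDegree = 2 := by
    compute_degree!
  rw [Polynomial.irreducible_iff_roots_eq_zero_of_degree_le_three (by omega) (by omega)]
  rw [Multiset.eq_zero_iff_forall_notMem]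
  intro x hx
  have h0 : (X ^ 2 + 1 : R[X]) ≠ 0 := fun h => by simp [h] at hdeg
  rw [mem_roots h0] at hx
  have : x ^ 2 + 1 = 0 := by simpa using hx
  nlinarith [sq_nonneg x]

variable {R}

lemma RCF.finrank_adjoinRoot [Fact (Irreducible (X ^ 2 + 1 : R[X]))] :
    finrank R (AdjoinRoot (X ^ 2 + 1 : R[X])) = 2 := by
  have h0 : (X ^ 2 + 1 : R[X]) ≠ 0 := (Fact.out (p := Irreducible (X ^ 2 + 1 : R[X]))).ne_zero
  have := (AdjoinRoot.powerBasis h0).finrank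
  rw [this, AdjoinRoot.powerBasis_dim]
  compute_degree!

lemma RCF.finiteDimensional_adjoinRoot [Fact (Irreducible (X ^ 2 + 1 : R[X]))] :
    FiniteDimensional R (AdjoinRoot (X ^ 2 + 1 : R[X])) := by
  have h0 : (X ^ 2 + 1 : R[X]) ≠ 0 := (Fact.out (p := Irreducible (X ^ 2 + 1 : R[X]))).ne_zero
  exact (AdjoinRoot.powerBasis h0).finite

lemma RCF.isAlgClosed_adjoinRoot (hsq : ∀ x : R, 0 ≤ x → ∃ y : R, y ^ 2 = x)
    (hodd : ∀ p : R[X], Odd p.natDegree → ∃ x : R, p.IsRoot x)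
    [Fact (Irreducible (X ^ 2 + 1 : R[X]))] :
    IsAlgClosed (AdjoinRoot (X ^ 2 + 1 : R[X])) := by
  set K := AdjoinRoot (X ^ 2 + 1 : R[X])
  haveI : FiniteDimensional R K := RCF.finiteDimensional_adjoinRoot
  apply IsAlgClosed.of_exists_root
  intro q hqm hqirr
  haveI : Fact (Irreducible q) := ⟨hqirr⟩
  set L := AdjoinRoot q
  have hq0 : q ≠ 0 := hqirr.ne_zero
  haveI : FiniteDimensional K L := (AdjoinRoot.powerBasis hq0).finite
  haveI : FiniteDimensional R L := FiniteDimensional.trans R K L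
  have h1 : finrank K L = q.natDegree := by
    rw [(AdjoinRoot.powerBasis hq0).finrank, AdjoinRoot.powerBasis_dim]
  have h2 : finrank R L = 2 * q.natDegree := by
    rw [← Module.finrank_mul_finrank R K L, RCF.finrank_adjoinRoot, h1]
  have hle := RCF.finrank_le_two hsq hodd L
  have hpos : 0 < q.natDegree := hqirr.natDegree_pos
  have hdeg1 : q.natDegree = 1 := by omega
  obtain ⟨x, hx⟩ := Polynomial.exists_root_of_degree_eq_one (p := q) (by
    rw [degree_eq_natDegree hq0, hdeg1]; rfl)
  exact ⟨x, hx⟩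

lemma RCF.mk_adjoinRoot (huncount : Cardinal.aleph0 < Cardinal.mk R)
    [Fact (Irreducible (X ^ 2 + 1 : R[X]))] :
    Cardinal.mk (AdjoinRoot (X ^ 2 + 1 : R[X])) = Cardinal.mk R := by
  have h0 : (X ^ 2 + 1 : R[X]) ≠ 0 := (Fact.out (p := Irreducible (X ^ 2 + 1 : R[X]))).ne_zero
  haveI : FiniteDimensional R (AdjoinRoot (X ^ 2 + 1 : R[X])) := RCF.finiteDimensional_adjoinRoot
  set pb := AdjoinRoot.powerBasis h0 with hpb
  have hd : pb.dim = 2 := by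
    rw [hpb, AdjoinRoot.powerBasis_dim]
    compute_degree!
  have e : AdjoinRoot (X ^ 2 + 1 : R[X]) ≃ (R × R) :=
    pb.basis.equivFun.toEquiv.trans
      ((Equiv.arrowCongr (finCongr hd) (Equiv.refl R)).trans (finTwoArrowEquiv R))
  rw [Cardinal.mk_congr e, Cardinal.mk_prod, Cardinal.lift_id]
  exact Cardinal.mul_eq_self huncount.le

end adjoin

section classification

universe u

lemma RCF.ringEquiv_of_card {K L : Type u} [Field K] [Field L] [IsAlgClosed K] [IsAlgClosed L]
    [CharZero K] [CharZero L] (hK : Cardinal.aleph0 < Cardinal.mk K)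
    (hKL : Cardinal.mk K = Cardinal.mk L) : Nonempty (K ≃+* L) := by
  letI : Algebra (ULift.{u} ℤ) K :=
    ((Int.castRingHom K).comp (ULift.ringEquiv (R := ℤ)).toRingHom).toAlgebra
  letI : Algebra (ULift.{u} ℤ) L :=
    ((Int.castRingHom L).comp (ULift.ringEquiv (R := ℤ)).toRingHom).toAlgebra
  have hinjK : Function.Injective (algebraMap (ULift.{u} ℤ) K) :=
    fun a b hab => (ULift.ringEquiv (R := ℤ)).injective
      (Int.cast_injective (α := K) hab)
  have hinjL : Function.Injective (algebraMap (ULift.{u} ℤ) L) :=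
    fun a b hab => (ULift.ringEquiv (R := ℤ)).injective
      (Int.cast_injective (α := L) hab)
  obtain ⟨s, hs⟩ := (haveI := (faithfulSMul_iff_algebraMap_injective (ULift.{u} ℤ) K).2 hinjK; exists_isTranscendenceBasis (ULift.{u} ℤ) K)
  obtain ⟨t, ht⟩ := (haveI := (faithfulSMul_iff_algebraMap_injective (ULift.{u} ℤ) L).2 hinjL; exists_isTranscendenceBasis (ULift.{u} ℤ) L)
  have hmkZ : Cardinal.mk (ULift.{u} ℤ) ≤ Cardinal.aleph0 := by
    simp [Cardinal.mk_uLift, Cardinal.mk_int]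
  have hst : Cardinal.mk s = Cardinal.mk t := by
    rw [← IsAlgClosed.cardinal_eq_cardinal_transcendence_basis_of_aleph0_lt' _ hs hmkZ hK,
      ← IsAlgClosed.cardinal_eq_cardinal_transcendence_basis_of_aleph0_lt' _ ht hmkZ
        (hKL ▸ hK), hKL]
  obtain ⟨e⟩ := Cardinal.eq.1 hst
  exact ⟨IsAlgClosed.equivOfTranscendenceBasis _ _ e hs ht⟩

end classification

/-- If `R₁` and `R₂` are real closed fields (linearly ordered fields in which every
nonnegative element has a square root and every odd-degree polynomial has a root) of the
same uncountable cardinality, then the fields `R₁(i)` and `R₂(i)`, obtained by adjoining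
a root of `X² + 1`, are isomorphic as fields. -/
theorem adjoin_i_isomorphic_of_realClosed_card_eq
    {R₁ R₂ : Type u} [Field R₁] [LinearOrder R₁] [IsStrictOrderedRing R₁]
    [Field R₂] [LinearOrder R₂] [IsStrictOrderedRing R₂]
    (hsq₁ : ∀ x : R₁, 0 ≤ x → ∃ y : R₁, y ^ 2 = x)
    (hodd₁ : ∀ p : R₁[X], Odd p.natDegree → ∃ x : R₁, p.IsRoot x)
    (hsq₂ : ∀ x : R₂, 0 ≤ x → ∃ y : R₂, y ^ 2 = x)
    (hodd₂ : ∀ p : R₂[X], Odd p.natDegree → ∃ x : R₂, p.IsRoot x)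
    (huncount : Cardinal.aleph0 < Cardinal.mk R₁)
    (hcard : Cardinal.mk R₁ = Cardinal.mk R₂) :
    Nonempty (AdjoinRoot (X ^ 2 + 1 : R₁[X]) ≃+* AdjoinRoot (X ^ 2 + 1 : R₂[X])) := by
  haveI : Fact (Irreducible (X ^ 2 + 1 : R₁[X])) := ⟨RCF.irreducible_X_sq_add_one R₁⟩
  haveI : Fact (Irreducible (X ^ 2 + 1 : R₂[X])) := ⟨RCF.irreducible_X_sq_add_one R₂⟩
  haveI : IsAlgClosed (AdjoinRoot (X ^ 2 + 1 : R₁[X])) :=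
    RCF.isAlgClosed_adjoinRoot hsq₁ hodd₁
  haveI : IsAlgClosed (AdjoinRoot (X ^ 2 + 1 : R₂[X])) :=
    RCF.isAlgClosed_adjoinRoot hsq₂ hodd₂
  haveI : CharZero (AdjoinRoot (X ^ 2 + 1 : R₁[X])) :=
    charZero_of_injective_algebraMap (algebraMap R₁ _).injective
  haveI : CharZero (AdjoinRoot (X ^ 2 + 1 : R₂[X])) :=
    charZero_of_injective_algebraMap (algebraMap R₂ _).injective
  have hm1 : Cardinal.mk (AdjoinRoot (X ^ 2 + 1 : R₁[X])) = Cardinal.mk R₁ :=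
    RCF.mk_adjoinRoot huncount
  have hm2 : Cardinal.mk (AdjoinRoot (X ^ 2 + 1 : R₂[X])) = Cardinal.mk R₂ :=
    RCF.mk_adjoinRoot (hcard ▸ huncount)
  exact RCF.ringEquiv_of_card (hm1 ▸ huncount) (by rw [hm1, hm2, hcard])
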